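/- Let $M$ be a matroid on ground set $E$ of rank $r+1$, and let $M \times p = (M^* + p)^*$ be its free dual extension, with the ground set $E \cup \{p\}$ linearly ordered so that $p$ is the least element. Then a subset $S \subseteq E$ is independent in $M$ if and only if $S$ contains no broken circuit of $M \times p$; that is, $\mathrm{IN}(M) = \overline{\mathrm{BC}}(M \times p)$. -/

import Mathlib

open Finset

open scoped Classical in
/-- The rank of a set `X` in a matroid `M`. -/
noncomputable def matroidRank {α : Type*} (M : Matroid α) (X : Set α) : ℕ :=
  sSup {n | ∃ I : Finset α, ↑I ⊆ X ∧ M.Indep ↑I ∧ I.card = n}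

/-- A circuit of a matroid: a minimal dependent set (here as a finset). -/
def IsMatroidCircuit {α : Type*} (M : Matroid α) (C : Finset α) : Prop :=
  ↑C ⊆ M.E ∧ ¬ M.Indep ↑C ∧ ∀ D : Finset α, D ⊂ C → M.Indep ↑D

/-- A broken circuit: a circuit with its least element (in the linear order) removed. -/
def IsBrokenCircuit {α : Type*} [LinearOrder α] (M : Matroid α) (B : Finset α) : Prop :=
  ∃ C : Finset α, IsMatroidCircuit M C ∧ ∃ h : C.Nonempty, B = C.erase (C.min' h)

lemma matroidRank_eq_of_base {α : Type*} [Fintype α] (M : Matroid α) {B : Set α} (hB : M.IsBase B) :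
    matroidRank M M.E = B.ncard := by
  have hfin : B.Finite := Set.toFinite B
  apply IsGreatest.csSup_eq
  constructor
  · exact ⟨hfin.toFinset, by simp [hB.subset_ground], by simpa using hB.indep,
      by rw [Set.ncard_eq_toFinset_card B hfin]⟩
  · rintro n ⟨I, hIE, hII, rfl⟩
    obtain ⟨B', hB', hIB'⟩ := hII.exists_isBase_superset
    have h1 : (↑I : Set α).ncard ≤ B'.ncard := Set.ncard_le_ncard hIB' (Set.toFinite B')
    rw [Set.ncard_coe_finset] at h1
    rwa [hB'.ncard_eq_ncard_of_isBase hB] at h1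

lemma exists_circuit_subset {α : Type*} [Fintype α] (M : Matroid α) :
    ∀ S : Finset α, ↑S ⊆ M.E → ¬ M.Indep ↑S → ∃ C, C ⊆ S ∧ IsMatroidCircuit M C := by
  intro S
  induction S using Finset.strongInduction with
  | _ S ih =>
    intro hSE hSdep
    by_cases h : ∀ D : Finset α, D ⊂ S → M.Indep ↑D
    · exact ⟨S, Finset.Subset.refl S, hSE, hSdep, h⟩
    · push_neg at h
      obtain ⟨D, hDS, hDdep⟩ := h
      obtain ⟨C, hCD, hC⟩ := ih D hDS (fun x hx => hSE (hDS.subset hx)) hDdep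
      exact ⟨C, hCD.trans hDS.subset, hC⟩

open scoped Classical in
/-- **Brylawski.** Let `M` be a matroid of rank `r+1` on `E` and let
`M × p = (M✶ + p)✶` be its free dual extension (`N` below is the free extension `M✶ + p`,
so `N✶` is the free dual extension), with the ground set ordered so that `p` is least.
Then a subset `S ⊆ E` is independent in `M` iff `S` contains no broken circuit of `M × p`;
that is, `IN(M) = BC̄(M × p)`. -/
theorem independence_complex_eq_reduced_broken_circuit_complex
    {α : Type*} [Fintype α] [LinearOrder α]
    (M : Matroid α) (r : ℕ) (h_rank : matroidRank M M.E = r + 1)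
    (p : α) (hp : p ∉ M.E) (hleast : ∀ x : α, p ≤ x)
    (N : Matroid α)
    (hNE : N.E = insert p M.E)
    (hNI : ∀ I : Set α, N.Indep I ↔
      ((M✶.Indep I ∧ p ∉ I) ∨
        (p ∈ I ∧ M✶.Indep (I \ {p}) ∧ (I \ {p}).ncard < matroidRank M✶ M✶.E))) :
    ∀ S : Finset α, ↑S ⊆ M.E →
      (M.Indep ↑S ↔ ∀ B, IsBrokenCircuit N✶ B → ¬ B ⊆ S) := by
  -- d is the corank
  set d := matroidRank M✶ M✶.E with hd
  -- every dual base is a base of N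
  have hNbase1 : ∀ B : Set α, M✶.IsBase B → N.IsBase B := by
    intro B hB
    have hpB : p ∉ B := fun h => hp (hB.subset_ground h)
    have hdB : d = B.ncard := matroidRank_eq_of_base M✶ hB
    rw [Matroid.isBase_iff_maximal_indep]
    refine ⟨(hNI B).2 (Or.inl ⟨hB.indep, hpB⟩), fun J hJ hBJ => ?_⟩
    rcases (hNI J).1 hJ with ⟨hJd, hpJ⟩ | ⟨hpJ, hJd, hcard⟩
    · exact le_of_eq (hB.eq_of_subset_indep hJd hBJ).symm
    · exfalso
      have h1 : B ⊆ J \ {p} := Set.subset_diff_singleton hBJ hpB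
      have h2 : B.ncard ≤ (J \ {p}).ncard := Set.ncard_le_ncard h1 (Set.toFinite _)
      omega
  -- independent dual set of size d-1, with p inserted, is a base of N
  have hNbase2 : ∀ I : Set α, M✶.Indep I → p ∉ I → I.ncard + 1 = d → N.IsBase (insert p I) := by
    intro I hI hpI hcard
    rw [Matroid.isBase_iff_maximal_indep]
    constructor
    · refine (hNI (insert p I)).2 (Or.inr ⟨Set.mem_insert p I, ?_, ?_⟩) <;>
        rw [show insert p I \ {p} = I by
          rw [Set.insert_diff_of_mem _ (Set.mem_singleton p),
            Set.diff_singleton_eq_self hpI]]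
      · exact hI
      · omega
    · intro J hJ hIJ
      have hpJ : p ∈ J := hIJ (Set.mem_insert p I)
      rcases (hNI J).1 hJ with ⟨_, hpJ'⟩ | ⟨_, hJd, hcard'⟩
      · exact absurd hpJ hpJ'
      · have h1 : I ⊆ J \ {p} := Set.subset_diff_singleton
          ((Set.subset_insert p I).trans hIJ) hpI
        have h2 : (J \ {p}).ncard ≤ I.ncard := by omega
        have h3 : I = J \ {p} := Set.eq_of_subset_of_ncard_le h1 h2 (Set.toFinite _)
        have h4 : J = insert p I := by
          rw [h3, Set.insert_diff_singleton, Set.insert_eq_self.2 hpJ]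
        exact le_of_eq h4
  -- complement of a base of M is a base of N
  have hcomplbase : ∀ B : Set α, M.IsBase B → N.IsBase (M.E \ B) :=
    fun B hB => hNbase1 _ hB.compl_isBase_dual
  -- the size-(d-1) construction
  have hd1base : ∀ (B : Set α) (e : α), M.IsBase B → e ∈ M.E → e ∉ B →
      N.IsBase (insert p (M.E \ insert e B)) := by
    intro B e hB he heB
    have hIdual : M✶.Indep (M.E \ insert e B) := by
      rw [Matroid.dual_indep_iff_exists']
      refine ⟨Set.diff_subset, B, hB, ?_⟩
      exact Set.disjoint_of_subset_right (Set.subset_insert e B) Set.disjoint_sdiff_left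
    have hpI : p ∉ M.E \ insert e B := fun h => hp h.1
    refine hNbase2 _ hIdual hpI ?_
    have hdb : d = (M.E \ B).ncard := matroidRank_eq_of_base M✶ hB.compl_isBase_dual
    have heq : M.E \ insert e B = (M.E \ B) \ {e} := by
      ext x
      simp only [Set.mem_diff, Set.mem_insert_iff, Set.mem_singleton_iff]
      tauto
    have hmem : e ∈ M.E \ B := ⟨he, heB⟩
    rw [heq, hdb, Set.ncard_diff_singleton_add_one hmem (Set.toFinite _)]
  have hNsE : N✶.E = insert p M.E := by rw [Matroid.dual_ground, hNE]
  -- Key lemma A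
  have keyA : ∀ C : Finset α, ↑C ⊆ insert p M.E → M.Indep ((↑C : Set α) \ {p}) →
      N✶.Indep ↑C := by
    intro C hCE hCind
    obtain ⟨B, hB, hCB⟩ := hCind.exists_isBase_superset
    rw [Matroid.dual_indep_iff_exists' ]
    refine ⟨by rwa [hNE], M.E \ B, hcomplbase B hB, ?_⟩
    rw [Set.disjoint_left]
    intro x hxC hxB
    rcases eq_or_ne x p with rfl | hxp
    · exact hp hxB.1
    · exact hxB.2 (hCB ⟨hxC, hxp⟩)
  -- Key lemma B
  have keyB : ∀ C : Finset α, ↑C ⊆ M.E → ∀ m ∈ C, ¬ M.Indep ↑C →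
      M.Indep ↑(C.erase m) → N✶.Indep ↑C := by
    intro C hCE m hm hCdep hCind
    obtain ⟨B, hB, hCB⟩ := hCind.exists_isBase_superset
    have hmB : m ∉ B := by
      intro hmB
      apply hCdep
      refine hB.indep.subset ?_
      intro x hx
      rcases eq_or_ne x m with rfl | hxm
      · exact hmB
      · exact hCB (by simpa [Finset.mem_erase, hxm] using And.intro hxm hx)
    refine (Matroid.dual_indep_iff_exists' ).2 ⟨?_, insert p (M.E \ insert m B),
      hd1base B m hB (hCE hm) hmB, ?_⟩
    · rw [hNE]; exact hCE.trans (Set.subset_insert p M.E)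
    · rw [Set.disjoint_left]
      intro x hxC hx
      rcases hx with rfl | ⟨hxE, hxmB⟩
      · exact hp (hCE hxC)
      · apply hxmB
        rcases eq_or_ne x m with rfl | hxm
        · exact Set.mem_insert x B
        · exact Set.mem_insert_of_mem m (hCB (by
            simpa [Finset.mem_erase, hxm] using And.intro hxm hxC))
  intro S hSE
  constructor
  · -- independent → no broken circuit
    intro hS B hB hBS
    obtain ⟨C, ⟨hCE, hCdep, hCmin⟩, hne, rfl⟩ := hB
    rw [hNsE] at hCE
    by_cases hpC : p ∈ C
    · have hmin : C.min' hne = p := le_antisymm (Finset.min'_le C p hpC) (hleast _)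
      rw [hmin] at hBS
      apply hCdep
      apply keyA C hCE
      have : ((↑C : Set α) \ {p}) = ↑(C.erase p) := by
        rw [Finset.coe_erase]
      rw [this]
      exact hS.subset (Finset.coe_subset.2 hBS)
    · have hCE' : ↑C ⊆ M.E := by
        intro x hx
        rcases hCE hx with rfl | h
        · exact absurd hx hpC
        · exact h
      set m := C.min' hne with hm
      have hmC : m ∈ C := Finset.min'_mem C hne
      have hind : M.Indep ↑(C.erase m) := hS.subset (Finset.coe_subset.2 hBS)
      by_cases hCi : M.Indep ↑C
      · apply hCdep
        apply keyA C (hCE'.trans (Set.subset_insert p M.E))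
        rwa [Set.diff_singleton_eq_self (by simpa using hpC)]
      · exact hCdep (keyB C hCE' m hmC hCi hind)
  · -- no broken circuit → independent
    intro h
    by_contra hSdep
    obtain ⟨CM, hCMS, hCM⟩ := exists_circuit_subset M S hSE hSdep
    have hpCM : p ∉ CM := fun hx => hp (hCM.1 hx)
    refine h CM ⟨insert p CM, ⟨?_, ?_, ?_⟩, ⟨p, Finset.mem_insert_self p CM⟩, ?_⟩ hCMS
    · rw [hNsE, Finset.coe_insert]
      exact Set.insert_subset_insert hCM.1
    · -- insert p CM is dependent in N✶
      intro hind
      obtain ⟨-, B, hBN, hdisj⟩ := (Matroid.dual_indep_iff_exists').1 hind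
      have hpB : p ∉ B := fun hx =>
        Set.disjoint_left.1 hdisj (by simp) hx
      have hBd : M✶.Indep B := by
        rcases (hNI B).1 hBN.indep with ⟨h1, _⟩ | ⟨h1, _⟩
        · exact h1
        · exact absurd h1 hpB
      obtain ⟨B', hB', hBB'⟩ := hBd.exists_isBase_superset
      have hBeq : B = B' := hBN.eq_of_subset_indep (hNbase1 B' hB').indep hBB'
      subst hBeq
      have hMbase : M.IsBase (M.E \ B) := hB'.compl_isBase_of_dual
      apply hCM.2.1
      refine hMbase.indep.subset ?_
      intro x hx
      refine ⟨hCM.1 hx, fun hxB => ?_⟩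
      exact Set.disjoint_left.1 hdisj (by simp [hx]) hxB
    · -- proper subsets are independent
      intro D hD
      obtain ⟨x, hxC, hxD⟩ := Finset.exists_of_ssubset hD
      have hDsub : D ⊆ (insert p CM).erase x := Finset.subset_erase.2 ⟨hD.subset, hxD⟩
      have hkey : N✶.Indep ↑((insert p CM).erase x) := by
        rcases eq_or_ne x p with rfl | hxp
        · rw [Finset.erase_insert hpCM]
          obtain ⟨m, hm⟩ : CM.Nonempty := by
            rcases CM.eq_empty_or_nonempty with rfl | hne
            · exact absurd (by simpa using M.empty_indep) hCM.2.1
            · exact hne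
          exact keyB CM hCM.1 m hm hCM.2.1 (hCM.2.2 _ (Finset.erase_ssubset hm))
        · have hxCM : x ∈ CM := by
            rcases Finset.mem_insert.1 hxC with rfl | h
            · exact absurd rfl hxp
            · exact h
          rw [show (insert p CM).erase x = insert p (CM.erase x) from
            Finset.erase_insert_of_ne hxp.symm]
          apply keyA
          · rw [Finset.coe_insert]
            apply Set.insert_subset_insert
            intro y hy
            exact hCM.1 (Finset.mem_coe.2 (Finset.erase_subset x CM (Finset.mem_coe.1 hy)))
          · have hpe : p ∉ (insert p (CM.erase x) : Finset α) \ {p} := by simp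
            rw [Finset.coe_insert, Set.insert_diff_of_mem _ (Set.mem_singleton p),
              Set.diff_singleton_eq_self
                (fun h => hpCM (Finset.erase_subset x CM (Finset.mem_coe.1 h)))]
            exact hCM.2.2 _ (Finset.erase_ssubset hxCM)
      exact hkey.subset (Finset.coe_subset.2 hDsub)
    · -- the broken circuit is CM
      have hmin : (insert p CM).min' _ = p :=
        le_antisymm (Finset.min'_le _ p (Finset.mem_insert_self p CM)) (hleast _)
      rw [hmin, Finset.erase_insert hpCM]
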